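/- Second-order contact action as pullback: if η_i = (dϑ)_{ij}dX^j and λ = ϑ_i dX^i solve the contact Jacobi sigma model equations, then the on-shell value of the action density η_i∧dX^i + ½Λ^{ij}η_i∧η_j − E^iη_i∧λ equals −½ (dϑ)_{ij} dX^i∧dX^j. -/
import Mathlib


open scoped BigOperators

/-- on a contact manifold (pointwise algebraic data `ϑ, σ, E, Λ` with
`ϑ(E)=1`, `ι_Eσ=0`, `Λ(ϑ,·)=0`, `σ(♯_Λγ,·) = −γ + γ(E)ϑ`), substituting the
on-shell values `η_i = σ_{ij}dX^j` and `λ = ϑ_i dX^i` into the Jacobi sigma model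
density `η_i∧dX^i + ½Λ^{ij}η_i∧η_j − E^iη_i∧λ` yields `−½ σ_{ij} dX^i∧dX^j`. -/
theorem contact_second_order_action_density
    {W : Type*} [AddCommGroup W] [Module ℝ W] [FiniteDimensional ℝ W]
    (hW : Module.finrank ℝ W = 2)
    (n : ℕ) (m : ℕ) (hm : m = 2 * n + 1)
    (ϑ : Fin m → ℝ) (σ : Fin m → Fin m → ℝ) (E : Fin m → ℝ)
    (L : Fin m → Fin m → ℝ)
    (hσskew : ∀ i j, σ i j = - σ j i)
    (hLskew : ∀ i j, L i j = - L j i)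
    (hϑE : (∑ i, ϑ i * E i) = 1)
    (hEσ : ∀ j, (∑ i, E i * σ i j) = 0)
    (hϑL : ∀ j, (∑ i, ϑ i * L i j) = 0)
    (hsharpσ : ∀ (γ : Fin m → ℝ) (j : Fin m),
      (∑ k, (∑ i, γ i * L i k) * σ k j) = - γ j + (∑ i, γ i * E i) * ϑ j)
    (dX : Fin m → W) (η : Fin m → W) (lam : W)
    (hη : ∀ i, η i = ∑ j, σ i j • dX j)
    (hlam : lam = ∑ i, ϑ i • dX i) :
    (∑ i, ExteriorAlgebra.ι ℝ (η i) * ExteriorAlgebra.ι ℝ (dX i))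
      + (1/2 : ℝ) • (∑ i, ∑ j, L i j •
          (ExteriorAlgebra.ι ℝ (η i) * ExteriorAlgebra.ι ℝ (η j)))
      - (∑ i, E i • (ExteriorAlgebra.ι ℝ (η i) * ExteriorAlgebra.ι ℝ lam)) =
    (-(1/2 : ℝ)) • (∑ i, ∑ j, σ i j •
        (ExteriorAlgebra.ι ℝ (dX i) * ExteriorAlgebra.ι ℝ (dX j))) := by
  classical
  set u : Fin m → ExteriorAlgebra ℝ W := fun i => ExteriorAlgebra.ι ℝ (dX i) with hu
  have hP : ∀ i, ExteriorAlgebra.ι ℝ (η i) = ∑ k, σ i k • u k := by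
    intro i; rw [hη i]; simp [hu]
  have hl : ExteriorAlgebra.ι ℝ lam = ∑ i, ϑ i • u i := by
    rw [hlam]; simp [hu]
  -- key consequence of hsharpσ with γ a basis covector
  have hLσ : ∀ i l, (∑ k, L i k * σ k l) = -(if l = i then (1:ℝ) else 0) + E i * ϑ l := by
    intro i l
    have h := hsharpσ (Pi.single i 1) l
    simpa [Pi.single_apply, ite_mul, Finset.sum_ite_eq', eq_comm] using h
  -- Q i := ∑ j, L i j • ι(η j) = -u i + E i • ι(lam)
  have hQ : ∀ i, (∑ j, L i j • ExteriorAlgebra.ι ℝ (η j))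
      = -u i + E i • (∑ l, ϑ l • u l) := by
    intro i
    calc ∑ j, L i j • ExteriorAlgebra.ι ℝ (η j)
        = ∑ j, ∑ l, (L i j * σ j l) • u l := by
          simp [hP, Finset.smul_sum, smul_smul]
      _ = ∑ l, (∑ j, L i j * σ j l) • u l := by
          rw [Finset.sum_comm]
          exact Finset.sum_congr rfl fun l _ => (Finset.sum_smul).symm
      _ = ∑ l, (-(if l = i then (1:ℝ) else 0) + E i * ϑ l) • u l := by
          exact Finset.sum_congr rfl fun l _ => by rw [hLσ]
      _ = -u i + E i • ∑ l, ϑ l • u l := by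
          simp [add_smul, neg_smul, ite_smul, Finset.sum_add_distrib,
            Finset.sum_ite_eq', mul_smul, Finset.smul_sum]
  -- the E-contraction of η vanishes
  have hEη : (∑ i, E i • ExteriorAlgebra.ι ℝ (η i)) = 0 := by
    calc ∑ i, E i • ExteriorAlgebra.ι ℝ (η i)
        = ∑ i, ∑ k, (E i * σ i k) • u k := by
          simp [hP, Finset.smul_sum, smul_smul]
      _ = ∑ k, (∑ i, E i * σ i k) • u k := by
          rw [Finset.sum_comm]
          exact Finset.sum_congr rfl fun k _ => (Finset.sum_smul).symm
      _ = 0 := by simp [hEσ]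
  -- third term vanishes
  have hT3 : (∑ i, E i • (ExteriorAlgebra.ι ℝ (η i) * ExteriorAlgebra.ι ℝ lam)) = 0 := by
    calc ∑ i, E i • (ExteriorAlgebra.ι ℝ (η i) * ExteriorAlgebra.ι ℝ lam)
        = (∑ i, E i • ExteriorAlgebra.ι ℝ (η i)) * ExteriorAlgebra.ι ℝ lam := by
          rw [Finset.sum_mul]
          exact Finset.sum_congr rfl fun i _ => (smul_mul_assoc _ _ _).symm
      _ = 0 := by rw [hEη, zero_mul]
  -- name T1
  set T1 : ExteriorAlgebra ℝ W :=
    ∑ i, ExteriorAlgebra.ι ℝ (η i) * ExteriorAlgebra.ι ℝ (dX i) with hT1def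
  -- second term equals -T1
  have hT2 : (∑ i, ∑ j, L i j • (ExteriorAlgebra.ι ℝ (η i) * ExteriorAlgebra.ι ℝ (η j)))
      = -T1 := by
    calc ∑ i, ∑ j, L i j • (ExteriorAlgebra.ι ℝ (η i) * ExteriorAlgebra.ι ℝ (η j))
        = ∑ i, ExteriorAlgebra.ι ℝ (η i) * (∑ j, L i j • ExteriorAlgebra.ι ℝ (η j)) := by
          refine Finset.sum_congr rfl fun i _ => ?_
          rw [Finset.mul_sum]
          exact Finset.sum_congr rfl fun j _ => (mul_smul_comm _ _ _).symm
      _ = ∑ i, ExteriorAlgebra.ι ℝ (η i) * (-u i + E i • (∑ l, ϑ l • u l)) := by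
          exact Finset.sum_congr rfl fun i _ => by rw [hQ i]
      _ = -T1 + (∑ i, E i • ExteriorAlgebra.ι ℝ (η i)) * (∑ l, ϑ l • u l) := by
          rw [hT1def, Finset.sum_mul, ← Finset.sum_neg_distrib, ← Finset.sum_add_distrib]
          refine Finset.sum_congr rfl fun i _ => ?_
          rw [mul_add, mul_neg, smul_mul_assoc, mul_smul_comm]
      _ = -T1 := by rw [hEη, zero_mul, add_zero]
  -- T1 in terms of σ
  have hT1 : T1 = -(∑ i, ∑ j, σ i j • (u i * u j)) := by
    calc T1 = ∑ i, ∑ k, σ i k • (u k * u i) := by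
          refine Finset.sum_congr rfl fun i _ => ?_
          rw [hP i, Finset.sum_mul]
          exact Finset.sum_congr rfl fun k _ => smul_mul_assoc _ _ _
      _ = ∑ k, ∑ i, σ i k • (u k * u i) := Finset.sum_comm
      _ = -(∑ i, ∑ j, σ i j • (u i * u j)) := by
          rw [← Finset.sum_neg_distrib]
          refine Finset.sum_congr rfl fun i _ => ?_
          rw [← Finset.sum_neg_distrib]
          refine Finset.sum_congr rfl fun j _ => ?_
          rw [hσskew j i, neg_smul]
  rw [hT2, hT3, hT1,
    show (∑ i, ∑ j, σ i j • (ExteriorAlgebra.ι ℝ (dX i) * ExteriorAlgebra.ι ℝ (dX j)))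
      = ∑ i, ∑ j, σ i j • (u i * u j) from rfl]
  module
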